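/- arXiv:2007.15462 — 2 statements merged into one kernel-verified Lean document; each statement's English description precedes it below -/
import Mathlib

section
/- Let s : ℝ → ℝ be differentiable with ṡ(t)·s(t) ≤ -β|s(t)| for all t, where β > 0. If s(0) ≠ 0, then there exists T ≤ |s(0)|/β such that s(T) = 0. -/
lemma aux_pos (s : ℝ → ℝ) (hs : Differentiable ℝ s) (β : ℝ) (hβ : 0 < β)
    (h : ∀ t, deriv s t * s t ≤ -β * |s t|)
    (h0 : 0 < s 0) :
    ∃ T ≤ |s 0| / β, s T = 0 := by
  by_contra hc
  push_neg at hc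
  set T₀ : ℝ := s 0 / β with hT₀
  have habs : |s 0| = s 0 := abs_of_pos h0
  have hT₀pos : 0 < T₀ := div_pos h0 hβ
  -- s is positive on [0, T₀]
  have pos : ∀ t ∈ Set.Icc (0:ℝ) T₀, 0 < s t := by
    intro t ht
    by_contra hle
    push_neg at hle
    have h0le : 0 ∈ Set.Icc (s t) (s 0) := ⟨hle, h0.le⟩
    obtain ⟨c, hc1, hc2⟩ := intermediate_value_Icc' ht.1 (hs.continuous.continuousOn) h0le
    exact hc (c) (by rw [habs]; exact hc1.2.trans ht.2) hc2
  -- derivative bound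
  have hderiv : ∀ t ∈ Set.Icc (0:ℝ) T₀, deriv s t ≤ -β := by
    intro t ht
    have hpos := pos t ht
    have := h t
    rw [abs_of_pos hpos] at this
    exact le_of_mul_le_mul_right this hpos
  -- g t = s t + β t is antitone on [0, T₀]
  have hg : AntitoneOn (fun t => s t + β * t) (Set.Icc (0:ℝ) T₀) := by
    apply antitoneOn_of_deriv_nonpos (convex_Icc _ _)
    · exact (hs.continuous.add (continuous_const.mul continuous_id)).continuousOn
    · intro t ht
      exact (((hs t).add ((differentiable_id.const_mul β) t)) : DifferentiableAt ℝ (fun t => s t + β * t) t).differentiableWithinAt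
    · intro t ht
      rw [interior_Icc] at ht
      have hd : HasDerivAt (fun t => s t + β * t) (deriv s t + β * 1) t :=
        (hs t).hasDerivAt.add ((hasDerivAt_id t).const_mul β)
      rw [hd.deriv]
      have := hderiv t ⟨ht.1.le, ht.2.le⟩
      linarith
  have key := hg (Set.left_mem_Icc.2 hT₀pos.le) (Set.right_mem_Icc.2 hT₀pos.le) hT₀pos.le
  simp only [mul_zero, add_zero] at key
  have : β * T₀ = s 0 := by
    rw [hT₀]
    field_simp [hβ.ne']
  have hfin : s T₀ ≤ 0 := by linarith
  exact absurd hfin (not_le.2 (pos T₀ (Set.right_mem_Icc.2 hT₀pos.le)))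

theorem stmt_1 (s : ℝ → ℝ) (hs : Differentiable ℝ s) (β : ℝ) (hβ : 0 < β)
    (h : ∀ t, deriv s t * s t ≤ -β * |s t|)
    (h0 : s 0 ≠ 0) :
    ∃ T ≤ |s 0| / β, s T = 0 := by
  rcases h0.lt_or_gt with hneg | hpos
  · obtain ⟨T, hT1, hT2⟩ := aux_pos (fun t => -s t) hs.neg β hβ
      (by
        intro t
        have hd : deriv (fun t => -s t) t = -deriv s t := by
          simp [deriv.neg]
        rw [hd]
        simpa using h t)
      (by simpa using hneg)
    refine ⟨T, ?_, by simpa using hT2⟩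
    simpa [abs_neg] using hT1
  · obtain ⟨T, hT1, hT2⟩ := aux_pos s hs β hβ h hpos
    exact ⟨T, hT1, hT2⟩
end

section
/- Let e : ℝ → ℝ be a C¹ function and λ > 0, and define s(t) = e(t) + λ·ė(t). If s(t) → 0 as t → ∞ and e is bounded, then e(t) → 0 as t → ∞. -/
open Real Filter intervalIntegral

theorem stmt_3 (e : ℝ → ℝ) (he : ContDiff ℝ 1 e) (l : ℝ) (hl : 0 < l)
    (s : ℝ → ℝ) (hsdef : ∀ t, s t = e t + l * deriv e t)
    (hs : Filter.Tendsto s Filter.atTop (nhds 0))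
    (hbdd : ∃ C, ∀ t, |e t| ≤ C) :
    Filter.Tendsto e Filter.atTop (nhds 0) := by
  have hl0 : l ≠ 0 := hl.ne'
  set f : ℝ → ℝ := fun t => e t * Real.exp (t / l) with hfdef
  have hcont_de : Continuous (deriv e) := he.continuous_deriv le_rfl
  have hcont_s : Continuous s := by
    have : s = fun t => e t + l * deriv e t := funext hsdef
    rw [this]; exact he.continuous.add (continuous_const.mul hcont_de)
  have hf' : ∀ t, HasDerivAt f (s t / l * Real.exp (t / l)) t := by
    intro t
    have h1 : HasDerivAt e (deriv e t) t := ((he.differentiable one_ne_zero) t).hasDerivAt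
    have h2 : HasDerivAt (fun u : ℝ => Real.exp (u / l)) (Real.exp (t / l) * (1 / l)) t := by
      simpa using ((hasDerivAt_id t).div_const l).exp
    have h3 := h1.mul h2
    refine h3.congr_deriv ?_
    rw [hsdef]; field_simp; ring
  have hcont_f' : Continuous (fun u => s u / l * Real.exp (u / l)) :=
    (hcont_s.div_const l).mul (Real.continuous_exp.comp (continuous_id.div_const l))
  -- key bound
  have key : ∀ ε' > (0:ℝ), ∀ T, (∀ u, T ≤ u → |s u| ≤ ε') → ∀ t, T ≤ t →
      |e t| ≤ |f T| * Real.exp (-(t / l)) + ε' := by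
    intro ε' hε' T hT t ht
    have hftc : ∫ u in T..t, s u / l * Real.exp (u / l) = f t - f T :=
      intervalIntegral.integral_eq_sub_of_hasDerivAt (fun u _ => hf' u)
        (hcont_f'.intervalIntegrable T t)
    have hftc2 : ∫ u in T..t, ε' / l * Real.exp (u / l)
        = ε' * Real.exp (t / l) - ε' * Real.exp (T / l) := by
      have : ∀ u ∈ Set.uIcc T t, HasDerivAt (fun v => ε' * Real.exp (v / l))
          (ε' / l * Real.exp (u / l)) u := by
        intro u _
        have := (((hasDerivAt_id u).div_const l).exp).const_mul ε'
        refine this.congr_deriv ?_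
        show ε' * (Real.exp (u / l) * (1 / l)) = _
        ring
      have h := intervalIntegral.integral_eq_sub_of_hasDerivAt this
        (((continuous_const.mul (Real.continuous_exp.comp
          (continuous_id.div_const l)))).intervalIntegrable T t)
      simpa using h
    have hbound : |f t - f T| ≤ ε' * Real.exp (t / l) - ε' * Real.exp (T / l) := by
      rw [← hftc, ← hftc2]
      calc |∫ u in T..t, s u / l * Real.exp (u / l)|
          ≤ ∫ u in T..t, |s u / l * Real.exp (u / l)| := by
            simpa only [Real.norm_eq_abs] using
              intervalIntegral.norm_integral_le_integral_norm
                (μ := MeasureTheory.volume) (f := fun u => s u / l * Real.exp (u / l)) ht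
        _ ≤ ∫ u in T..t, ε' / l * Real.exp (u / l) := by
            apply intervalIntegral.integral_mono_on ht
            · exact (hcont_f'.abs.intervalIntegrable T t)
            · exact ((continuous_const.mul (Real.continuous_exp.comp
                (continuous_id.div_const l))).intervalIntegrable T t)
            · intro u hu
              rw [abs_mul, abs_div]
              have h1 : |s u| ≤ ε' := hT u hu.1
              have h2 : |Real.exp (u / l)| = Real.exp (u / l) := abs_of_pos (Real.exp_pos _)
              rw [h2, abs_of_pos hl]
              gcongr
    have hft : |f t| ≤ |f T| + ε' * Real.exp (t / l) := by
      have := abs_sub_abs_le_abs_sub (f t) (f T)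
      nlinarith [Real.exp_pos (T / l), mul_pos hε' (Real.exp_pos (T / l))]
    have hexp : Real.exp (t / l) > 0 := Real.exp_pos _
    have het : e t = f t * Real.exp (-(t / l)) := by
      simp only [hfdef, Real.exp_neg]
      field_simp
    rw [het, abs_mul, abs_of_pos (Real.exp_pos (-(t / l)))]
    have h4 : |f t| * Real.exp (-(t / l)) ≤ (|f T| + ε' * Real.exp (t / l)) * Real.exp (-(t / l)) :=
      mul_le_mul_of_nonneg_right hft (Real.exp_pos _).le
    refine h4.trans ?_
    rw [add_mul, mul_assoc, ← Real.exp_add]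
    simp
  -- conclude
  rw [Metric.tendsto_atTop]
  intro ε hε
  have hε2 : (0:ℝ) < ε / 2 := by linarith
  obtain ⟨T, hT⟩ := (Metric.tendsto_atTop.mp hs) (ε / 2) hε2
  have hT' : ∀ u, T ≤ u → |s u| ≤ ε / 2 := by
    intro u hu
    have := hT u hu
    rw [Real.dist_eq, sub_zero] at this
    exact this.le
  have hlim : Filter.Tendsto (fun t => |f T| * Real.exp (-(t / l))) atTop (nhds 0) := by
    have h1 : Filter.Tendsto (fun t : ℝ => -(t / l)) atTop atBot :=
      Filter.tendsto_neg_atBot_iff.mpr (tendsto_id.atTop_div_const hl)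
    have h2 := Real.tendsto_exp_atBot.comp h1
    have := h2.const_mul (|f T|)
    simpa using this
  have hev : ∀ᶠ t in atTop, |f T| * Real.exp (-(t / l)) < ε / 2 :=
    hlim.eventually_lt_const hε2
  obtain ⟨N, hN⟩ := Filter.eventually_atTop.mp (hev.and (Filter.eventually_ge_atTop T))
  refine ⟨N, fun t htN => ?_⟩
  rw [Real.dist_eq, sub_zero]
  have hk := key (ε/2) hε2 T hT' t (hN t htN).2
  have h5 := (hN t htN).1
  calc |e t| ≤ |f T| * Real.exp (-(t / l)) + ε / 2 := hk
    _ < ε / 2 + ε / 2 := by linarith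
    _ = ε := by ring
end
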